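/- Let p₁, p₂, p₃ be linearly independent unit vectors in ℝ³ (points of the sphere S²), and for each unordered pair {i,j} let c_ij = c_ji be a unit vector in span(p_i, p_j). Then there exists a nonzero vector c ∈ ℝ³ satisfying c · ((c₁₂ · p₁)p₂ − (c₁₂ · p₂)p₁) = 0, c · ((c₂₃ · p₂)p₃ − (c₂₃ · p₃)p₂) = 0, and c · ((c₃₁ · p₃)p₁ − (c₃₁ · p₁)p₃) = 0 (i.e., the three great circles perpendicular to the edges through the edge centers meet at a single point of the projective sphere) if and only if (p₁ · c₁₂)(p₂ · c₂₃)(p₃ · c₃₁) = (p₁ · c₃₁)(p₂ · c₁₂)(p₃ · c₂₃); writing cos d_ij := p_i · c_ij, this condition reads cos d₁₂ cos d₂₃ cos d₃₁ = cos d₂₁ cos d₃₂ cos d₁₃. -/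
import Mathlib


noncomputable section

/-- The standard dot product on ℝ³. -/
def dot3 (u v : Fin 3 → ℝ) : ℝ := u 0 * v 0 + u 1 * v 1 + u 2 * v 2

/-- Proposition 7.1 (spherical compatibility): the three great circles perpendicular to the
edges of a spherical triangle through the edge centers meet at a single point of the
projective sphere if and only if the compatibility equation
`(p₁·c₁₂)(p₂·c₂₃)(p₃·c₃₁) = (p₁·c₃₁)(p₂·c₁₂)(p₃·c₂₃)` holds, i.e.,
`cos d₁₂ cos d₂₃ cos d₃₁ = cos d₂₁ cos d₃₂ cos d₁₃` where `cos d_ij = p_i · c_ij`. -/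
theorem spherical_duality_iff_compatibility
    (p : Fin 3 → (Fin 3 → ℝ)) (hp : LinearIndependent ℝ p)
    (hpS : ∀ i, dot3 (p i) (p i) = 1)
    (c : Fin 3 → Fin 3 → (Fin 3 → ℝ))
    (hcsymm : ∀ i j : Fin 3, c i j = c j i)
    (hcS : ∀ i j : Fin 3, i ≠ j → dot3 (c i j) (c i j) = 1 ∧
      c i j ∈ Submodule.span ℝ ({p i, p j} : Set (Fin 3 → ℝ))) :
    (∃ cc : Fin 3 → ℝ, cc ≠ 0 ∧
        dot3 cc (dot3 (c 0 1) (p 0) • p 1 - dot3 (c 0 1) (p 1) • p 0) = 0 ∧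
        dot3 cc (dot3 (c 1 2) (p 1) • p 2 - dot3 (c 1 2) (p 2) • p 1) = 0 ∧
        dot3 cc (dot3 (c 2 0) (p 2) • p 0 - dot3 (c 2 0) (p 0) • p 2) = 0) ↔
      dot3 (p 0) (c 0 1) * dot3 (p 1) (c 1 2) * dot3 (p 2) (c 2 0)
        = dot3 (p 0) (c 2 0) * dot3 (p 1) (c 0 1) * dot3 (p 2) (c 1 2) := by
  classical
  set a := dot3 (c 0 1) (p 0) with ha
  set b := dot3 (c 0 1) (p 1) with hb
  set d := dot3 (c 1 2) (p 1) with hd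
  set e := dot3 (c 1 2) (p 2) with he
  set f := dot3 (c 2 0) (p 2) with hf
  set g := dot3 (c 2 0) (p 0) with hg
  set P : Matrix (Fin 3) (Fin 3) ℝ := Matrix.of p with hP
  set A : Matrix (Fin 3) (Fin 3) ℝ := !![-b, a, 0; 0, -e, d; f, 0, -g] with hA
  set M : Matrix (Fin 3) (Fin 3) ℝ := A * P with hM
  have hrow0 : ∀ j, M 0 j = (a • p 1 - b • p 0) j := by
    intro j
    simp [hM, Matrix.mul_apply, Fin.sum_univ_three, hA, hP, Matrix.vecHead, Matrix.vecTail,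
      Function.comp]
    ring
  have hrow1 : ∀ j, M 1 j = (d • p 2 - e • p 1) j := by
    intro j
    simp [hM, Matrix.mul_apply, Fin.sum_univ_three, hA, hP, Matrix.vecHead, Matrix.vecTail,
      Function.comp]
    ring
  have hrow2 : ∀ j, M 2 j = (f • p 0 - g • p 2) j := by
    intro j
    simp [hM, Matrix.mul_apply, Fin.sum_univ_three, hA, hP, Matrix.vecHead, Matrix.vecTail,
      Function.comp]
    ring
  have hm0 : ∀ cc, M.mulVec cc 0 = dot3 cc (a • p 1 - b • p 0) := by
    intro cc
    simp [Matrix.mulVec, dotProduct, Fin.sum_univ_three, hrow0, dot3]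
    ring
  have hm1 : ∀ cc, M.mulVec cc 1 = dot3 cc (d • p 2 - e • p 1) := by
    intro cc
    simp [Matrix.mulVec, dotProduct, Fin.sum_univ_three, hrow1, dot3]
    ring
  have hm2 : ∀ cc, M.mulVec cc 2 = dot3 cc (f • p 0 - g • p 2) := by
    intro cc
    simp [Matrix.mulVec, dotProduct, Fin.sum_univ_three, hrow2, dot3]
    ring
  have hPdet : P.det ≠ 0 := by
    rw [ne_eq, ← Matrix.exists_vecMul_eq_zero_iff]
    rintro ⟨v, hv, hveq⟩
    apply hv
    have hz : ∑ i, v i • p i = 0 := by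
      funext j
      have := congrFun hveq j
      simpa [Matrix.vecMul, dotProduct, Fin.sum_univ_three, hP] using this
    funext i
    exact (Fintype.linearIndependent_iff.mp hp) v (by simpa using hz) i
  have key : (∃ cc : Fin 3 → ℝ, cc ≠ 0 ∧
        dot3 cc (a • p 1 - b • p 0) = 0 ∧
        dot3 cc (d • p 2 - e • p 1) = 0 ∧
        dot3 cc (f • p 0 - g • p 2) = 0) ↔ M.det = 0 := by
    rw [← Matrix.exists_mulVec_eq_zero_iff]
    constructor
    · rintro ⟨cc, hcc, h0, h1, h2⟩
      refine ⟨cc, hcc, ?_⟩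
      funext i
      fin_cases i
      · exact (hm0 cc).trans h0
      · exact (hm1 cc).trans h1
      · exact (hm2 cc).trans h2
    · rintro ⟨cc, hcc, hceq⟩
      exact ⟨cc, hcc, by rw [← hm0, hceq]; rfl, by rw [← hm1, hceq]; rfl,
        by rw [← hm2, hceq]; rfl⟩
  rw [key]
  have hMdet : M.det = A.det * P.det := by rw [hM, Matrix.det_mul]
  have hAdet : A.det = a * d * f - b * e * g := by
    simp [hA, Matrix.det_fin_three]; ring
  have hcomm : ∀ u v : Fin 3 → ℝ, dot3 u v = dot3 v u := by
    intro u v; simp only [dot3]; ring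
  rw [hMdet, hAdet, mul_eq_zero]
  rw [hcomm (p 0) (c 0 1), hcomm (p 1) (c 1 2), hcomm (p 2) (c 2 0),
      hcomm (p 0) (c 2 0), hcomm (p 1) (c 0 1), hcomm (p 2) (c 1 2),
      ← ha, ← hb, ← hd, ← he, ← hf, ← hg]
  constructor
  · rintro (h | h)
    · linarith [sub_eq_zero.mp h]
    · exact absurd h hPdet
  · intro h
    left
    linarith
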